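/- Let ρ: W → GL(V) be a finite-dimensional irreducible representation of a group W over a field F, and let s₁, …, s_k ∈ W be such that each s_i acts on V as a generalized reflection with reflection vector α_i, W is generated by {s₁, …, s_k}, and for all i, j, s_i · α_j ≠ α_j if and only if s_j · α_i ≠ α_i. Define a graph G on vertex set S = {1, …, k} with edges E = {{i, j} : s_i · α_j ≠ α_j}. Then there exists a subset I ⊆ S such that {α_i : i ∈ I} is a basis of V and the subgraph of G induced on I is connected. -/

import Mathlib

open Module ExteriorAlgebra

variable {F : Type*} [Field F] {V : Type*} [AddCommGroup V] [Module F V]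
  {V₂ : Type*} [AddCommGroup V₂] [Module F V₂]

/-- A (generalized) reflection: a diagonalizable endomorphism `s` with
`rank (s - id) = 1`. -/
def IsReflection (s : V →ₗ[F] V) : Prop :=
  (⨆ μ : F, Module.End.eigenspace s μ) = ⊤ ∧
    Module.finrank F (LinearMap.range (s - LinearMap.id)) = 1

theorem extPower_map_mem (d : ℕ) (f : V →ₗ[F] V₂) {x : ExteriorAlgebra F V}
    (hx : x ∈ ⋀[F]^d V) : ExteriorAlgebra.map f x ∈ ⋀[F]^d V₂ := by
  have h : Submodule.map (ExteriorAlgebra.map f).toLinearMap (⋀[F]^d V) ≤ ⋀[F]^d V₂ := by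
    rw [exteriorPower, Submodule.map_pow, ι_range_map_map]
    have h1 : Submodule.map (ι F (M := V₂)) (LinearMap.range f)
        ≤ LinearMap.range (ι F (M := V₂)) := by
      rintro - ⟨y, -, rfl⟩
      exact ⟨y, rfl⟩
    exact pow_le_pow_left' h1 d
  exact h ⟨x, hx, rfl⟩

/-- The linear map induced on `d`-th exterior powers by a linear map; for the inclusion
`H.subtype` of a subspace `H ⊆ V` this realizes `⋀^d H` as a subspace of `⋀^d V`
(via its range). -/
noncomputable def extMap (d : ℕ) (f : V →ₗ[F] V₂) : (⋀[F]^d V) →ₗ[F] (⋀[F]^d V₂) :=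
  (ExteriorAlgebra.map f).toLinearMap.restrict (fun _ hx => extPower_map_mem d f hx)

@[simp] theorem extMap_apply_coe (d : ℕ) (f : V →ₗ[F] V₂) (x : ⋀[F]^d V) :
    (extMap d f x : ExteriorAlgebra F V₂) = ExteriorAlgebra.map f x := rfl

variable {W : Type*} [Group W]

/-- The representation of `W` on the `d`-th exterior power `⋀^d V` induced by a
representation of `W` on `V`, given by `w · (v₁ ∧ ⋯ ∧ v_d) = (w·v₁) ∧ ⋯ ∧ (w·v_d)`. -/
noncomputable def extRep (ρ : Representation F W V) (d : ℕ) :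
    Representation F W (⋀[F]^d V) where
  toFun w := extMap d (ρ w)
  map_one' := by
    apply LinearMap.ext
    intro x
    apply Subtype.ext
    simp only [extMap_apply_coe, map_one]
    show (ExteriorAlgebra.map (LinearMap.id) : _) _ = _
    rw [ExteriorAlgebra.map_id]
    rfl
  map_mul' a b := by
    apply LinearMap.ext
    intro x
    apply Subtype.ext
    simp only [extMap_apply_coe, map_mul]
    show (ExteriorAlgebra.map (ρ a ∘ₗ ρ b) : _) _ = _
    rw [← ExteriorAlgebra.map_comp_map]
    rfl

/-- Irreducibility (simplicity) of a representation: the space is nonzero and the only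
invariant subspaces are `⊥` and `⊤`. -/
def Representation.IsIrreducible' (ρ : Representation F W V) : Prop :=
  Nontrivial V ∧
    ∀ U : Submodule F V, (∀ w : W, ∀ v ∈ U, ρ w v ∈ U) → U = ⊥ ∨ U = ⊤

/-- Isomorphism of two representations of `W`: an equivariant linear equivalence. -/
def Representation.Iso {F W : Type*} [CommSemiring F] [Monoid W]
    {V₁ V₂ : Type*} [AddCommMonoid V₁] [Module F V₁] [AddCommMonoid V₂] [Module F V₂]
    (ρ₁ : Representation F W V₁) (ρ₂ : Representation F W V₂) : Prop :=
  ∃ e : V₁ ≃ₗ[F] V₂, ∀ (w : W) (v : V₁), e (ρ₁ w v) = ρ₂ w (e v)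

/-- The wedge product `v 0 ∧ v 1 ∧ ⋯ ∧ v (d-1)` as an element of `⋀^d V`. -/
noncomputable def wedge (d : ℕ) (v : Fin d → V) : ⋀[F]^d V :=
  ⟨ExteriorAlgebra.ιMulti F d v, ExteriorAlgebra.ιMulti_range F d ⟨v, rfl⟩⟩

/-- Let `ρ : W → GL(V)` be a finite-dimensional irreducible
representation, with `s 1, …, s k ∈ W` acting as generalized reflections with reflection
vectors `α i`, `W` generated by the `s i`, and `s i · α j ≠ α j ↔ s j · α i ≠ α i` for all
`i, j`. Form the graph `G` on `{1, …, k}` with edges `{i, j}` whenever `s i · α j ≠ α j`.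
Then there is a subset `I ⊆ {1, …, k}` such that `{α i : i ∈ I}` is a basis of `V` and the
induced subgraph of `G` on `I` is connected. -/
private theorem induce_singleton_connected {α : Type*} (G : SimpleGraph α) (a : α) :
    (G.induce {a}).Connected := by
  rw [SimpleGraph.connected_iff]
  refine ⟨?_, ⟨⟨a, rfl⟩⟩⟩
  intro u v
  have : u = v := Subtype.ext (u.2.trans v.2.symm)
  rw [this]

private theorem induce_insert_connected {α : Type*} {G : SimpleGraph α} {A : Set α}
    (hA : (G.induce A).Connected) {a b : α} (ha : a ∈ A) (hab : G.Adj b a) :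
    (G.induce (insert b A)).Connected := by
  have hmem : ∀ x ∈ A, x ∈ insert b A := fun x hx => Set.mem_insert_of_mem _ hx
  rw [SimpleGraph.connected_iff]
  refine ⟨?_, ⟨⟨b, Set.mem_insert _ _⟩⟩⟩
  intro u v
  let φ : G.induce A →g G.induce (insert b A) :=
    ⟨fun x => ⟨x.1, hmem _ x.2⟩, fun {p q} h => h⟩
  have key : ∀ u : ↥(insert b A),
      (G.induce (insert b A)).Reachable u ⟨a, hmem a ha⟩ := by
    intro u
    rcases u.2 with h | h
    · apply SimpleGraph.Adj.reachable
      show G.Adj u.1 a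
      rw [h]; exact hab
    · have := (hA.preconnected ⟨u.1, h⟩ ⟨a, ha⟩).map φ
      convert this using 2 <;> rfl
  exact (key u).trans (key v).symm

theorem exists_basis_subset_induced_connected
    [FiniteDimensional F V] (ρ : Representation F W V)
    {k : ℕ} (hk : 0 < k) (s : Fin k → W) (α : Fin k → V)
    (hrefl : ∀ i, IsReflection (ρ (s i)))
    (hα : ∀ i, α i ≠ 0)
    (hαmem : ∀ i, α i ∈ LinearMap.range (ρ (s i) - LinearMap.id))
    (hgen : Subgroup.closure (Set.range s) = ⊤)
    (hirr : ρ.IsIrreducible')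
    (hsym : ∀ i j, ρ (s i) (α j) ≠ α j ↔ ρ (s j) (α i) ≠ α i) :
    ∃ I : Set (Fin k),
      LinearIndependent F (fun i : I => α ↑i) ∧
      Submodule.span F (α '' I) = ⊤ ∧
      ((SimpleGraph.mk (fun i j : Fin k => i ≠ j ∧ ρ (s i) (α j) ≠ α j)
        ⟨fun i j h => ⟨h.1.symm, (hsym i j).mp h.2⟩⟩
        ⟨fun i h => h.1 rfl⟩).induce I).Connected := by
  classical
  set G : SimpleGraph (Fin k) := SimpleGraph.mk (fun i j : Fin k => i ≠ j ∧ ρ (s i) (α j) ≠ α j)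
    ⟨fun i j h => ⟨h.1.symm, (hsym i j).mp h.2⟩⟩ ⟨fun i h => h.1 rfl⟩ with hGdef
  -- the range of s_i - id is spanned by α i
  have hrange : ∀ j, LinearMap.range (ρ (s j) - LinearMap.id) = Submodule.span F {α j} := by
    intro j
    refine (Submodule.eq_of_le_of_finrank_le ?_ ?_).symm
    · exact (Submodule.span_singleton_le_iff_mem _ _).mpr (hαmem j)
    · rw [finrank_span_singleton (hα j)]
      exact le_of_eq (hrefl j).2
  have hact : ∀ j v, ∃ c : F, ρ (s j) v = v + c • α j := by
    intro j v
    have hm : ρ (s j) v - v ∈ LinearMap.range (ρ (s j) - LinearMap.id) :=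
      ⟨v, by simp [LinearMap.sub_apply]⟩
    rw [hrange j, Submodule.mem_span_singleton] at hm
    obtain ⟨c, hc⟩ := hm
    exact ⟨c, by rw [hc]; abel⟩
  -- property P
  set P : Finset (Fin k) → Prop := fun I =>
    LinearIndependent F (fun i : (↑I : Set (Fin k)) => α ↑i) ∧ (G.induce ↑I).Connected
    with hPdef
  have i0 : Fin k := ⟨0, hk⟩
  have hP0 : P {i0} := by
    constructor
    · rw [Finset.coe_singleton]
      exact linearIndependent_unique_iff.mpr (by simpa using hα i0)
    · rw [Finset.coe_singleton]
      exact induce_singleton_connected G i0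
  obtain ⟨I, hImem, hImax⟩ := Finset.exists_max_image
    (Finset.univ.filter P) Finset.card ⟨{i0}, by
      simp only [Finset.mem_filter, Finset.mem_univ, true_and]
      exact hP0⟩
  have hIP : P I := (Finset.mem_filter.mp hImem).2
  set U : Submodule F V := Submodule.span F (α '' ↑I) with hUdef
  -- if α i ∉ U then s i fixes every α m, m ∈ I
  have hstep : ∀ i, α i ∉ U → ∀ m ∈ I, ρ (s i) (α m) = α m := by
    intro i hi m hm
    by_contra hne
    have him : i ∉ I := fun h => hi (Submodule.subset_span ⟨i, h, rfl⟩)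
    have hadj : G.Adj i m := by
      refine ⟨fun h => him (h ▸ hm), hne⟩
    have hPJ : P (insert i I) := by
      constructor
      · rw [Finset.coe_insert]
        refine (linearIndepOn_insert (f := α) (by exact_mod_cast him)).mpr ?_
        exact ⟨hIP.1, hi⟩
      · rw [Finset.coe_insert]
        exact induce_insert_connected hIP.2 hm hadj
    have hcard : I.card < (insert i I).card := by
      rw [Finset.card_insert_of_notMem him]; omega
    have := hImax (insert i I) (Finset.mem_filter.mpr ⟨Finset.mem_univ _, hPJ⟩)
    omega
  -- U is invariant under each generator
  have hUle : ∀ i, Submodule.map (ρ (s i)) U ≤ U := by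
    intro i
    rw [hUdef, Submodule.map_span]
    apply Submodule.span_le.mpr
    rintro - ⟨-, ⟨m, hm, rfl⟩, rfl⟩
    by_cases hi : α i ∈ U
    · obtain ⟨c, hc⟩ := hact i (α m)
      rw [hc]
      exact U.add_mem (Submodule.subset_span ⟨m, hm, rfl⟩) (U.smul_mem c hi)
    · rw [hstep i hi m hm]
      exact Submodule.subset_span ⟨m, hm, rfl⟩
  have hUeq : ∀ i, Submodule.map (ρ (s i)) U = U := by
    intro i
    let e : V ≃ₗ[F] V := LinearEquiv.ofLinear (ρ (s i)) (ρ ((s i)⁻¹))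
      (by rw [← Module.End.mul_eq_comp, ← map_mul, mul_inv_cancel, map_one]; rfl)
      (by rw [← Module.End.mul_eq_comp, ← map_mul, inv_mul_cancel, map_one]; rfl)
    have he : (e : V →ₗ[F] V) = ρ (s i) := rfl
    refine Submodule.eq_of_le_of_finrank_le (hUle i) ?_
    rw [← he, LinearEquiv.finrank_map_eq]
  -- U is invariant under all of W
  have hW : ∀ w : W, Submodule.map (ρ w) U = U := by
    let K : Subgroup W :=
      { carrier := {w | Submodule.map (ρ w) U = U}
        one_mem' := by
          show Submodule.map (ρ 1) U = U
          rw [map_one]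
          exact Submodule.map_id U
        mul_mem' := by
          intro a b ha hb
          show Submodule.map (ρ (a * b)) U = U
          rw [map_mul, Module.End.mul_eq_comp, Submodule.map_comp]
          rw [show Submodule.map (ρ b) U = U from hb,
            show Submodule.map (ρ a) U = U from ha]
        inv_mem' := by
          intro a ha
          replace ha : Submodule.map (ρ a) U = U := ha
          show Submodule.map (ρ a⁻¹) U = U
          conv_lhs => rw [← ha]
          rw [← Submodule.map_comp, ← Module.End.mul_eq_comp, ← map_mul, inv_mul_cancel,
            map_one]
          exact Submodule.map_id U }
    have hle : Subgroup.closure (Set.range s) ≤ K := by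
      rw [Subgroup.closure_le]
      rintro - ⟨i, rfl⟩
      exact hUeq i
    intro w
    exact hle (hgen ▸ Subgroup.mem_top w)
  -- irreducibility
  have hUtop : U = ⊤ := by
    rcases hirr.2 U (fun w v hv => (hW w) ▸ Submodule.mem_map_of_mem hv) with h | h
    · exfalso
      obtain ⟨⟨m, hm⟩⟩ := hIP.2.nonempty
      have : α m ∈ U := Submodule.subset_span ⟨m, hm, rfl⟩
      rw [h] at this
      exact hα m (by simpa using this)
    · exact h
  exact ⟨↑I, hIP.1, hUtop, hIP.2⟩
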